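/- Let S be a numerical semigroup that is not of the form {0, m, m+1, m+2, ...}. Then the concentration of S equals 2 if and only if for every gap h of S (i.e., h ∈ ℕ \ S) with h > m(S), we have h+1 ∈ S, where m(S) denotes the multiplicity of S. -/
import Mathlib


open Set

/-- A numerical semigroup: contains 0, closed under addition, finite complement. -/
def IsNumSgp (S : Set ℕ) : Prop :=
  0 ∈ S ∧ (∀ a ∈ S, ∀ b ∈ S, a + b ∈ S) ∧ (Sᶜ : Set ℕ).Finite

/-- The multiplicity: least positive element. -/
noncomputable def mult (S : Set ℕ) : ℕ := sInf {n | n ∈ S ∧ n ≠ 0}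

/-- next_S(s) = min { x ∈ S | s < x }. -/
noncomputable def nextS (S : Set ℕ) (s : ℕ) : ℕ := sInf {x | x ∈ S ∧ s < x}

/-- The concentration C(S) = max { next_S(s) - s | s ∈ S \ {0} }. -/
noncomputable def conc (S : Set ℕ) : ℕ :=
  sSup {d | ∃ s ∈ S, s ≠ 0 ∧ d = nextS S s - s}

/-- The Frobenius number: largest gap. -/
noncomputable def frob (S : Set ℕ) : ℕ := sSup (Sᶜ : Set ℕ)

/-- The genus: number of gaps. -/
noncomputable def genus (S : Set ℕ) : ℕ := (Sᶜ : Set ℕ).ncard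

/-- x is a minimal generator of S. -/
def IsMinGen (S : Set ℕ) (x : ℕ) : Prop :=
  x ∈ S ∧ x ≠ 0 ∧ ¬∃ a ∈ S, ∃ b ∈ S, a ≠ 0 ∧ b ≠ 0 ∧ a + b = x

/-- The embedding dimension: number of minimal generators. -/
noncomputable def edim (S : Set ℕ) : ℕ := {x | IsMinGen S x}.ncard

/-- n(S): the number of elements of S smaller than the Frobenius number. -/
noncomputable def nS (S : Set ℕ) : ℕ := {s | s ∈ S ∧ s < frob S}.ncard

/-- The half-line Δ(m) = {0} ∪ {m, m+1, ...}. -/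
def Delta (m : ℕ) : Set ℕ := {0} ∪ {n | m ≤ n}

def IsHalfLine (S : Set ℕ) : Prop := ∃ m, S = Delta m

/-- An irreducible numerical semigroup. -/
def Irred (S : Set ℕ) : Prop :=
  ¬∃ T₁ T₂ : Set ℕ, IsNumSgp T₁ ∧ IsNumSgp T₂ ∧ S ⊂ T₁ ∧ S ⊂ T₂ ∧ S = T₁ ∩ T₂

section helpers
variable {S : Set ℕ} {x s : ℕ}

lemma frob_lt_mem (hfin : (Sᶜ : Set ℕ).Finite) {n : ℕ} (hn : frob S < n) : n ∈ S := by
  by_contra h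
  exact absurd (le_csSup hfin.bddAbove (h : n ∈ (Sᶜ : Set ℕ))) (not_le.mpr hn)

lemma nextS_mem (hfin : (Sᶜ : Set ℕ).Finite) (s : ℕ) :
    nextS S s ∈ S ∧ s < nextS S s := by
  have hne : {x | x ∈ S ∧ s < x}.Nonempty :=
    ⟨s + frob S + 1, frob_lt_mem hfin (by omega), by omega⟩
  exact Nat.sInf_mem hne

lemma nextS_le (hx : x ∈ S) (hsx : s < x) : nextS S s ≤ x := Nat.sInf_le ⟨hx, hsx⟩

lemma nextS_bound (hfin : (Sᶜ : Set ℕ).Finite) (s : ℕ) :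
    nextS S s ≤ s + frob S + 1 :=
  nextS_le (frob_lt_mem hfin (by omega)) (by omega)

lemma mult_spec (hfin : (Sᶜ : Set ℕ).Finite) : mult S ∈ S ∧ mult S ≠ 0 :=
  Nat.sInf_mem (⟨frob S + 1, frob_lt_mem hfin (by omega), by omega⟩ :
    {n | n ∈ S ∧ n ≠ 0}.Nonempty)

lemma mult_le (hx : x ∈ S) (hx0 : x ≠ 0) : mult S ≤ x := Nat.sInf_le ⟨hx, hx0⟩

lemma conc_bdd (hfin : (Sᶜ : Set ℕ).Finite) :
    BddAbove {d | ∃ s ∈ S, s ≠ 0 ∧ d = nextS S s - s} := by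
  refine ⟨frob S + 1, fun d hd => ?_⟩
  obtain ⟨s, hs, hs0, rfl⟩ := hd
  have := nextS_bound (S := S) hfin s
  omega

end helpers

theorem stmt0 (S : Set ℕ) (hS : IsNumSgp S) (hnot : ¬IsHalfLine S) :
    conc S = 2 ↔ ∀ h : ℕ, h ∉ S → mult S < h → h + 1 ∈ S := by
  obtain ⟨h0, _, hfin⟩ := hS
  obtain ⟨hmS, hm0⟩ := mult_spec (S := S) hfin
  constructor
  · intro hc h hh hmh
    by_contra hh1
    set A : Set ℕ := {x | x ∈ S ∧ x < h} with hA
    have hAbdd : BddAbove A := ⟨h, fun x hx => hx.2.le⟩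
    have hAne : A.Nonempty := ⟨mult S, hmS, hmh⟩
    set s := sSup A with hs
    have hsA : s ∈ A := Nat.sSup_mem hAne hAbdd
    have hsmax : ∀ x ∈ A, x ≤ s := fun x hx => le_csSup hAbdd hx
    have hs0 : s ≠ 0 := by
      have := hsmax (mult S) ⟨hmS, hmh⟩; omega
    have hn := nextS_mem (S := S) hfin s
    have hbig : h + 1 < nextS S s := by
      rcases Nat.lt_or_ge (nextS S s) h with hlt | hge
      · have := hsmax _ ⟨hn.1, hlt⟩; omega
      · rcases Nat.eq_or_lt_of_le hge with heq | hlt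
        · exact absurd (heq ▸ hn.1) hh
        · rcases Nat.eq_or_lt_of_le hlt with heq | h2
          · refine absurd ?_ hh1
            have : h + 1 = nextS S s := heq
            rw [this]; exact hn.1
          · omega
    have hd : nextS S s - s ∈ {d | ∃ s ∈ S, s ≠ 0 ∧ d = nextS S s - s} :=
      ⟨s, hsA.1, hs0, rfl⟩
    have hle := le_csSup (conc_bdd hfin) hd
    rw [show sSup {d | ∃ s ∈ S, s ≠ 0 ∧ d = nextS S s - s} = conc S from rfl, hc] at hle
    have hsh : s < h := hsA.2
    omega
  · intro H
    have hle : ∀ s ∈ S, s ≠ 0 → nextS S s ≤ s + 2 := by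
      intro s hs hs0
      by_cases h1 : s + 1 ∈ S
      · exact (nextS_le h1 (by omega)).trans (by omega)
      · have hm : mult S < s + 1 := by have := mult_le hs hs0; omega
        exact nextS_le (H _ h1 hm) (by omega)
    have hgap : ∃ h, h ∉ S ∧ mult S < h := by
      by_contra hg
      push_neg at hg
      apply hnot
      refine ⟨mult S, Set.eq_of_subset_of_subset ?_ ?_⟩
      · intro n hn
        by_cases hn0 : n = 0
        · exact Or.inl hn0
        · exact Or.inr (mult_le hn hn0)
      · rintro n (rfl | hn)
        · exact h0
        · by_contra hns
          rcases Nat.eq_or_lt_of_le hn with heq | hlt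
          · exact hns (heq ▸ hmS)
          · exact (hg n hns).not_gt hlt
    set B : Set ℕ := {h | h ∉ S ∧ mult S < h} with hB
    set g := sInf B with hg
    have hgB : g ∈ B := Nat.sInf_mem hgap
    have hgm : g - 1 ∈ S := by
      rcases Nat.eq_or_lt_of_le (Nat.succ_le_of_lt hgB.2) with heq | hlt
      · have he : g - 1 = mult S := by omega
        exact he ▸ hmS
      · by_contra hc
        have hmem : g - 1 ∈ B := ⟨hc, by omega⟩
        have := Nat.sInf_le hmem
        omega
    set s := g - 1 with hsdef
    have hs0 : s ≠ 0 := by have := hgB.2; omega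
    have hsucc : s + 1 ∉ S := by
      have he : s + 1 = g := by have := hgB.2; omega
      exact he ▸ hgB.1
    have hn := nextS_mem (S := S) hfin s
    have hnext : nextS S s = s + 2 := by
      have h1 : nextS S s ≤ s + 2 := hle s hgm hs0
      have h2 : nextS S s ≠ s + 1 := fun he => hsucc (he ▸ hn.1)
      omega
    have h2mem : (2 : ℕ) ∈ {d | ∃ s ∈ S, s ≠ 0 ∧ d = nextS S s - s} :=
      ⟨s, hgm, hs0, by omega⟩
    have hge2 : 2 ≤ conc S := le_csSup (conc_bdd hfin) h2mem
    have hle2 : conc S ≤ 2 := by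
      apply csSup_le ⟨2, h2mem⟩
      rintro d ⟨s, hs, hs0, rfl⟩
      have ha := hle s hs hs0
      have hb := (nextS_mem (S := S) hfin s).2
      omega
    omega
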